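/- The proper energy density of a relativistic Maxwellian satisfies ρ = 3p + m₀c²n K_1(z)/K_2(z): with z = m₀c²/(k_Bθ) and P⁰ = √(m₀²c²+|P̄|²), c·n·(z/(4π m₀³c³ K_2(z))) ∫_{ℝ³} P⁰ exp(−zP⁰/(m₀c)) dP̄ = 3 n k_B θ + m₀c² n K_1(z)/K_2(z). -/

import Mathlib

open Real MeasureTheory

section Aux

open Set

lemma aux_integrable {z : ℝ} (hz : 0 < z) {g : ℝ → ℝ} (k : ℕ) (hg : Continuous g)
    (h0 : ∀ l ∈ Ioi z, 0 ≤ g l) (h1 : ∀ l ∈ Ioi z, g l ≤ l ^ k) :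
    IntegrableOn (fun l => Real.exp (-l) * g l) (Ioi z) := by
  have hG : IntegrableOn (fun x : ℝ => Real.exp (-x) * x ^ (((k : ℝ) + 1) - 1)) (Ioi z) :=
    (Real.GammaIntegral_convergent (by positivity)).mono_set (Ioi_subset_Ioi hz.le)
  apply hG.integrable.mono
  · exact ((Real.continuous_exp.comp continuous_neg).mul hg).aestronglyMeasurable
  · filter_upwards [ae_restrict_mem measurableSet_Ioi] with l hl
    have hl0 : 0 < l := hz.trans hl
    have hr : l ^ (((k : ℝ) + 1) - 1) = l ^ k := by
      rw [add_sub_cancel_right, Real.rpow_natCast]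
    rw [Real.norm_eq_abs, Real.norm_eq_abs, abs_of_nonneg
        (mul_nonneg (Real.exp_pos _).le (h0 l hl)),
      abs_of_nonneg (mul_nonneg (Real.exp_pos _).le (by rw [hr]; positivity)), hr]
    exact mul_le_mul_of_nonneg_left (h1 l hl) (Real.exp_pos _).le

lemma int_sqrt {z : ℝ} (hz : 0 < z) :
    IntegrableOn (fun l => Real.exp (-l) * Real.sqrt (l ^ 2 - z ^ 2)) (Ioi z) := by
  refine aux_integrable hz 1 (Real.continuous_sqrt.comp (by continuity))
    (fun l _ => Real.sqrt_nonneg _) (fun l hl => ?_)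
  have hl0 : 0 < l := hz.trans hl
  calc Real.sqrt (l ^ 2 - z ^ 2) ≤ Real.sqrt (l ^ 2) :=
        Real.sqrt_le_sqrt (by nlinarith)
    _ = l ^ 1 := by rw [Real.sqrt_sq hl0.le, pow_one]

lemma int_rpow {z : ℝ} (hz : 0 < z) :
    IntegrableOn (fun l => Real.exp (-l) * (l ^ 2 - z ^ 2) ^ ((3 : ℝ) / 2)) (Ioi z) := by
  refine aux_integrable hz 3 (Continuous.rpow_const (by continuity)
    (fun x => Or.inr (by norm_num)))
    (fun l hl => Real.rpow_nonneg (by nlinarith [mem_Ioi.mp hl]) _)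
    (fun l hl => ?_)
  have hl0 : 0 < l := hz.trans hl
  calc (l ^ 2 - z ^ 2) ^ ((3 : ℝ) / 2) ≤ (l ^ 2) ^ ((3 : ℝ) / 2) :=
        Real.rpow_le_rpow (by nlinarith [mem_Ioi.mp hl]) (by nlinarith [mem_Ioi.mp hl])
          (by norm_num)
    _ = l ^ 3 := by
        rw [← Real.rpow_natCast l 2, ← Real.rpow_mul hl0.le]
        norm_num

lemma int_mid {z : ℝ} (hz : 0 < z) :
    IntegrableOn (fun l => Real.exp (-l) * (l ^ 2 * Real.sqrt (l ^ 2 - z ^ 2))) (Ioi z) := by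
  refine aux_integrable hz 3 (by continuity) (fun l hl => by positivity) (fun l hl => ?_)
  have hl0 : 0 < l := hz.trans hl
  calc l ^ 2 * Real.sqrt (l ^ 2 - z ^ 2) ≤ l ^ 2 * l := by
        refine mul_le_mul_of_nonneg_left ?_ (by positivity)
        calc Real.sqrt (l ^ 2 - z ^ 2) ≤ Real.sqrt (l ^ 2) := Real.sqrt_le_sqrt (by nlinarith)
          _ = l := Real.sqrt_sq hl0.le
    _ = l ^ 3 := by ring

lemma subst_lemma (a z : ℝ) (ha : 0 < a) (hz : 0 < z) :
    (∫ y in Ioi (0:ℝ),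
        y ^ 2 * (Real.sqrt (a ^ 2 + y ^ 2) * Real.exp (-z * Real.sqrt (a ^ 2 + y ^ 2) / a))) =
      (a / z) ^ 4 * ∫ l in Ioi z, Real.exp (-l) * (l ^ 2 * Real.sqrt (l ^ 2 - z ^ 2)) := by
  set f : ℝ → ℝ := fun l => (a / z) * Real.sqrt (l ^ 2 - z ^ 2) with hf
  have haz : 0 < a / z := div_pos ha hz
  have himg : f '' Ioi z = Ioi (0:ℝ) := by
    ext r
    constructor
    · rintro ⟨l, hl, rfl⟩
      have hl' := mem_Ioi.mp hl
      have : 0 < l ^ 2 - z ^ 2 := by nlinarith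
      exact mem_Ioi.mpr (mul_pos haz (Real.sqrt_pos.mpr this))
    · intro hr
      have hr' := mem_Ioi.mp hr
      refine ⟨Real.sqrt (z ^ 2 + (z * r / a) ^ 2), ?_, ?_⟩
      · have h1 : z = Real.sqrt (z ^ 2) := (Real.sqrt_sq hz.le).symm
        rw [mem_Ioi]
        nth_rewrite 1 [h1]
        apply Real.sqrt_lt_sqrt (by positivity)
        have : 0 < (z * r / a) ^ 2 := by positivity
        linarith
      · have hnn : (0:ℝ) ≤ z ^ 2 + (z * r / a) ^ 2 := by positivity
        rw [hf]
        simp only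
        rw [Real.sq_sqrt hnn]
        have : z ^ 2 + (z * r / a) ^ 2 - z ^ 2 = (z * r / a) ^ 2 := by ring
        rw [this, Real.sqrt_sq (by positivity)]
        field_simp
  have hderiv : ∀ l ∈ Ioi z, HasDerivWithinAt f
      ((a / z) * (l / Real.sqrt (l ^ 2 - z ^ 2))) (Ioi z) l := by
    intro l hl
    have hl' := mem_Ioi.mp hl
    have hpos : 0 < l ^ 2 - z ^ 2 := by nlinarith
    have h1 : HasDerivAt (fun l : ℝ => l ^ 2 - z ^ 2) (2 * l) l := by
      simpa using (hasDerivAt_pow 2 l).sub_const (z ^ 2)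
    have h2 : HasDerivAt (fun l : ℝ => Real.sqrt (l ^ 2 - z ^ 2))
        (1 / (2 * Real.sqrt (l ^ 2 - z ^ 2)) * (2 * l)) l :=
      (Real.hasDerivAt_sqrt hpos.ne').comp l h1
    have h3 := h2.const_mul (a / z)
    have hs : Real.sqrt (l ^ 2 - z ^ 2) ≠ 0 := (Real.sqrt_pos.mpr hpos).ne'
    have : (a / z) * (1 / (2 * Real.sqrt (l ^ 2 - z ^ 2)) * (2 * l)) =
        (a / z) * (l / Real.sqrt (l ^ 2 - z ^ 2)) := by field_simp
    rw [this] at h3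
    exact h3.hasDerivWithinAt
  have hinj : Set.InjOn f (Ioi z) := by
    intro x hx y hy hxy
    have hx' := mem_Ioi.mp hx
    have hy' := mem_Ioi.mp hy
    have hxp : 0 < x ^ 2 - z ^ 2 := by nlinarith
    have hyp : 0 < y ^ 2 - z ^ 2 := by nlinarith
    have h1 : Real.sqrt (x ^ 2 - z ^ 2) = Real.sqrt (y ^ 2 - z ^ 2) :=
      mul_left_cancel₀ haz.ne' hxy
    have h2 : x ^ 2 - z ^ 2 = y ^ 2 - z ^ 2 := by
      have := congrArg (fun t => t ^ 2) h1
      simpa [Real.sq_sqrt hxp.le, Real.sq_sqrt hyp.le] using this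
    have h3 : (x - y) * (x + y) = 0 := by nlinarith
    rcases mul_eq_zero.mp h3 with h | h
    · linarith
    · nlinarith
  rw [← himg, integral_image_eq_integral_abs_deriv_smul measurableSet_Ioi hderiv hinj]
  rw [← MeasureTheory.integral_const_mul]
  apply setIntegral_congr_fun measurableSet_Ioi
  intro l hl
  have hl' := mem_Ioi.mp hl
  have hl0 : 0 < l := hz.trans hl'
  have hpos : 0 < l ^ 2 - z ^ 2 := by nlinarith
  set s := Real.sqrt (l ^ 2 - z ^ 2) with hsdef
  have hs : 0 < s := Real.sqrt_pos.mpr hpos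
  have hs2 : s ^ 2 = l ^ 2 - z ^ 2 := Real.sq_sqrt hpos.le
  have hfl : f l = (a / z) * s := rfl
  have hsq : a ^ 2 + (f l) ^ 2 = ((a / z) * l) ^ 2 := by
    rw [hfl, mul_pow, mul_pow, hs2]
    field_simp
    ring
  have hsqrt : Real.sqrt (a ^ 2 + (f l) ^ 2) = (a / z) * l := by
    rw [hsq, Real.sqrt_sq (by positivity)]
  have hexp : -z * ((a / z) * l) / a = -l := by field_simp
  have habs : |(a / z) * (l / s)| = (a / z) * (l / s) := abs_of_pos (by positivity)
  beta_reduce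
  rw [smul_eq_mul, habs, hsqrt, hexp, hfl]
  rw [mul_pow]
  field_simp
  ring

lemma ball_vol :
    (volume (Metric.ball (0 : EuclideanSpace ℝ (Fin 3)) 1)).toReal = 4 * π / 3 := by
  rw [EuclideanSpace.volume_ball]
  have hcard : (Fintype.card (Fin 3) : ℝ) = 3 := by simp
  have hG : Real.Gamma ((Fintype.card (Fin 3) : ℝ) / 2 + 1) = 3 * Real.sqrt π / 4 := by
    rw [hcard]
    have h1 : (3 : ℝ) / 2 + 1 = (1 / 2 + 1) + 1 := by norm_num
    rw [h1, Real.Gamma_add_one (by norm_num), Real.Gamma_add_one (by norm_num),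
      Real.Gamma_one_half_eq]
    ring
  rw [hG]
  have hsπ : 0 < Real.sqrt π := Real.sqrt_pos.mpr Real.pi_pos
  have h3 : Real.sqrt π ^ Fintype.card (Fin 3) = π * Real.sqrt π := by
    simp only [Fintype.card_fin]
    rw [pow_succ, sq_sqrt Real.pi_pos.le]
  rw [h3]
  rw [ENNReal.toReal_mul, ENNReal.toReal_pow, ENNReal.toReal_ofReal zero_le_one,
    ENNReal.toReal_ofReal (by positivity)]
  field_simp
  ring

lemma spherical (F : ℝ → ℝ) :
    (∫ P : EuclideanSpace ℝ (Fin 3), F ‖P‖) =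
      4 * π * ∫ y in Ioi (0:ℝ), y ^ 2 * F y := by
  rw [MeasureTheory.integral_fun_norm_addHaar (volume : Measure (EuclideanSpace ℝ (Fin 3))) F]
  have hdim : Module.finrank ℝ (EuclideanSpace ℝ (Fin 3)) = 3 := by
    simp [finrank_euclideanSpace]
  rw [hdim, measureReal_def, ball_vol]
  rw [nsmul_eq_mul, smul_eq_mul]
  norm_num [smul_eq_mul]
  ring

end Aux

/-- `K_1(z) = z⁻¹ ∫_z^∞ e^{-λ}(λ²−z²)^{1/2} dλ`. -/
noncomputable def K1 (z : ℝ) : ℝ :=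
  z⁻¹ * ∫ l in Set.Ioi z, Real.exp (-l) * Real.sqrt (l ^ 2 - z ^ 2)

/-- `K_2(z) = (1/3) z⁻² ∫_z^∞ e^{-λ}(λ²−z²)^{3/2} dλ`. -/
noncomputable def K2 (z : ℝ) : ℝ :=
  (1 / 3) * z ^ (-2 : ℤ) * ∫ l in Set.Ioi z, Real.exp (-l) * (l ^ 2 - z ^ 2) ^ ((3 : ℝ) / 2)

section Aux2

open Set

lemma K2_pos {z : ℝ} (hz : 0 < z) : 0 < K2 z := by
  have hI : 0 < ∫ l in Ioi z, Real.exp (-l) * (l ^ 2 - z ^ 2) ^ ((3 : ℝ) / 2) := by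
    rw [setIntegral_pos_iff_support_of_nonneg_ae ?_ (int_rpow hz)]
    · refine lt_of_lt_of_le ?_ (measure_mono (fun l hl => ⟨?_, hl⟩))
      · simp [Real.volume_Ioi]
      · have : 0 < l ^ 2 - z ^ 2 := by have := mem_Ioi.mp hl; nlinarith
        exact ne_of_gt (mul_pos (Real.exp_pos _) (Real.rpow_pos_of_pos this _))
    · filter_upwards [ae_restrict_mem measurableSet_Ioi] with l hl
      have : (0:ℝ) ≤ l ^ 2 - z ^ 2 := by have := mem_Ioi.mp hl; nlinarith
      positivity
  have : (0:ℝ) < z ^ (-2 : ℤ) := zpow_pos hz _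
  unfold K2; positivity

lemma J_eq {z : ℝ} (hz : 0 < z) :
    ∫ l in Ioi z, Real.exp (-l) * (l ^ 2 * Real.sqrt (l ^ 2 - z ^ 2)) =
      3 * z ^ 2 * K2 z + z ^ 3 * K1 z := by
  have hptw : ∀ l ∈ Ioi z,
      Real.exp (-l) * (l ^ 2 * Real.sqrt (l ^ 2 - z ^ 2)) =
        Real.exp (-l) * (l ^ 2 - z ^ 2) ^ ((3 : ℝ) / 2) +
          z ^ 2 * (Real.exp (-l) * Real.sqrt (l ^ 2 - z ^ 2)) := by
    intro l hl
    have hpos : 0 < l ^ 2 - z ^ 2 := by have := mem_Ioi.mp hl; nlinarith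
    have h32 : (l ^ 2 - z ^ 2) ^ ((3 : ℝ) / 2) =
        (l ^ 2 - z ^ 2) * Real.sqrt (l ^ 2 - z ^ 2) := by
      rw [Real.sqrt_eq_rpow, ← Real.rpow_one_add' hpos.le (by norm_num)]
      norm_num
    rw [h32]; ring
  rw [setIntegral_congr_fun measurableSet_Ioi hptw,
    integral_add (int_rpow hz) ((int_sqrt hz).const_mul _), MeasureTheory.integral_const_mul]
  have h2 : ∫ l in Ioi z, Real.exp (-l) * (l ^ 2 - z ^ 2) ^ ((3 : ℝ) / 2) = 3 * z ^ 2 * K2 z := by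
    unfold K2
    rw [zpow_neg, zpow_two]
    field_simp
  have h1 : ∫ l in Ioi z, Real.exp (-l) * Real.sqrt (l ^ 2 - z ^ 2) = z * K1 z := by
    unfold K1; field_simp
  rw [h1, h2]; ring

end Aux2

/-- The proper energy density of a relativistic Maxwellian:
`ρ = 3p + m₀c² n K_1(z)/K_2(z)` with `p = n k_B θ`. -/
theorem maxwellian_energy_density (m₀ c kB θ n z : ℝ)
    (hm : 0 < m₀) (hc : 0 < c) (hkB : 0 < kB) (hθ : 0 < θ) (hn : 0 < n)
    (hz : z = m₀ * c ^ 2 / (kB * θ)) :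
    c * n * (z / (4 * π * m₀ ^ 3 * c ^ 3 * K2 z)) *
        (∫ P : EuclideanSpace ℝ (Fin 3),
          Real.sqrt (m₀ ^ 2 * c ^ 2 + ‖P‖ ^ 2) *
            Real.exp (-z * Real.sqrt (m₀ ^ 2 * c ^ 2 + ‖P‖ ^ 2) / (m₀ * c))) =
      3 * n * kB * θ + m₀ * c ^ 2 * n * (K1 z / K2 z) := by
  have hz0 : 0 < z := by rw [hz]; positivity
  have ha : 0 < m₀ * c := mul_pos hm hc
  have key : (∫ P : EuclideanSpace ℝ (Fin 3),
        Real.sqrt (m₀ ^ 2 * c ^ 2 + ‖P‖ ^ 2) *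
          Real.exp (-z * Real.sqrt (m₀ ^ 2 * c ^ 2 + ‖P‖ ^ 2) / (m₀ * c))) =
      4 * π * ((m₀ * c / z) ^ 4 *
        ∫ l in Set.Ioi z, Real.exp (-l) * (l ^ 2 * Real.sqrt (l ^ 2 - z ^ 2))) := by
    have hsub := subst_lemma (m₀ * c) z ha hz0
    rw [show (m₀ * c) ^ 2 = m₀ ^ 2 * c ^ 2 from by ring] at hsub
    have hsp := spherical (fun y => Real.sqrt (m₀ ^ 2 * c ^ 2 + y ^ 2) *
          Real.exp (-z * Real.sqrt (m₀ ^ 2 * c ^ 2 + y ^ 2) / (m₀ * c)))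
    beta_reduce at hsp
    rw [hsp, hsub]
  rw [key, J_eq hz0]
  have hK2 : K2 z ≠ 0 := (K2_pos hz0).ne'
  have h1 : kB * θ * z = m₀ * c ^ 2 := by
    rw [hz]; field_simp
  field_simp
  linear_combination (-3 * K2 z) * h1
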